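/- For every K ≥ 1 there exist positive constants c₁, c₂ such that for all a > b > c > 0 satisfying a ≤ K·b whenever a ≥ 1, one has c₁·(min(1,a) + b^{3/2}/√(c·(1+c))) ≤ ∫_0^a ((w+b)^{3/2}/(√w·(w+c)))·e^{-w} dw ≤ c₂·(min(1,a) + b^{3/2}/√(c·(1+c))). -/

import Mathlib

open Real MeasureTheory intervalIntegral Set

/-- exp(-1) ≥ 1/3 -/
lemma aux_exp_third : (1:ℝ)/3 ≤ Real.exp (-1) := by
  have h1 : Real.exp 1 ≤ 3 := le_of_lt (lt_trans Real.exp_one_lt_d9 (by norm_num))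
  rw [Real.exp_neg]
  have := inv_anti₀ (by norm_num : (0:ℝ) < 3) (by norm_num : (3:ℝ) ≤ 3)
  calc (1:ℝ)/3 = 3⁻¹ := by norm_num
    _ ≤ (Real.exp 1)⁻¹ := inv_anti₀ (Real.exp_pos 1) h1

lemma aux_sqrt_add_le (x y : ℝ) (hx : 0 ≤ x) (hy : 0 ≤ y) :
    Real.sqrt (x + y) ≤ Real.sqrt x + Real.sqrt y := by
  have h1 : x + y ≤ (Real.sqrt x + Real.sqrt y)^2 := by
    have := Real.sq_sqrt hx; have := Real.sq_sqrt hy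
    have := Real.sqrt_nonneg x; have := Real.sqrt_nonneg y
    nlinarith [mul_nonneg (Real.sqrt_nonneg x) (Real.sqrt_nonneg y)]
  calc Real.sqrt (x+y) ≤ Real.sqrt ((Real.sqrt x + Real.sqrt y)^2) := Real.sqrt_le_sqrt h1
    _ = Real.sqrt x + Real.sqrt y := Real.sqrt_sq (by positivity)

lemma aux_rpow_th (x : ℝ) (hx : 0 ≤ x) : x ^ ((3:ℝ)/2) = x * Real.sqrt x := by
  rw [show (3:ℝ)/2 = 1 + 1/2 by norm_num, Real.rpow_add_of_nonneg hx (by norm_num) (by norm_num),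
    Real.rpow_one, ← Real.sqrt_eq_rpow]

/-- ∫₀ˣ w^(-1/2) = 2√x -/
lemma aux_int_inv_sqrt (x : ℝ) (hx : 0 ≤ x) :
    ∫ w in (0:ℝ)..x, w ^ (-(1:ℝ)/2) = 2 * Real.sqrt x := by
  rw [integral_rpow (Or.inl (by norm_num))]
  rw [show -(1:ℝ)/2 + 1 = 1/2 by norm_num, Real.zero_rpow (by norm_num), Real.sqrt_eq_rpow]
  ring

lemma aux_II_inv_sqrt (u v C : ℝ) :
    IntervalIntegrable (fun w => C * w ^ (-(1:ℝ)/2)) volume u v :=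
  (intervalIntegrable_rpow' (by norm_num)).const_mul C

/-- integrability of exp(-w)/(√w (w+c)) on [0,a] -/
lemma aux_II_eh2 (a c : ℝ) (hc : 0 < c) (h0a : 0 ≤ a) :
    IntervalIntegrable (fun w => Real.exp (-w) / (Real.sqrt w * (w + c))) volume 0 a := by
  apply (aux_II_inv_sqrt 0 a (1/c)).mono_fun
  · exact (by fun_prop : Measurable fun w => Real.exp (-w) / (Real.sqrt w * (w + c))).aestronglyMeasurable
  · rw [Filter.EventuallyLE, ae_restrict_iff' measurableSet_uIoc]
    refine Filter.Eventually.of_forall (fun w hw => ?_)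
    rw [uIoc_of_le h0a] at hw
    obtain ⟨hw0, hwa⟩ := hw
    have hsw : 0 < Real.sqrt w := Real.sqrt_pos.mpr hw0
    have hwc : 0 < w + c := by linarith
    rw [Real.norm_eq_abs, Real.norm_eq_abs, abs_of_nonneg (by positivity),
      abs_of_nonneg (by positivity)]
    rw [show -(1:ℝ)/2 = -(1/2) by norm_num, Real.rpow_neg hw0.le, ← Real.sqrt_eq_rpow]
    rw [div_le_iff₀ (by positivity)]
    have h1 : Real.exp (-w) ≤ 1 := Real.exp_le_one_iff.mpr (by linarith)
    have : (1/c) * (Real.sqrt w)⁻¹ * (Real.sqrt w * (w + c)) = (w + c)/c := by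
      field_simp
    rw [this]
    calc Real.exp (-w) ≤ 1 := h1
      _ ≤ (w + c)/c := by rw [le_div_iff₀ hc]; linarith

lemma aux_eh2_ub (c w : ℝ) (hc : 0 < c) (hw : 0 < w) :
    Real.exp (-w) / (Real.sqrt w * (w + c)) ≤ (1/c) * w ^ (-(1:ℝ)/2) := by
  have hsw : 0 < Real.sqrt w := Real.sqrt_pos.mpr hw
  rw [show -(1:ℝ)/2 = -(1/2) by norm_num, Real.rpow_neg hw.le, ← Real.sqrt_eq_rpow]
  have h1 : Real.exp (-w) ≤ 1 := Real.exp_le_one_iff.mpr (by linarith)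
  rw [div_le_iff₀ (by positivity)]
  have he : (1/c) * (Real.sqrt w)⁻¹ * (Real.sqrt w * (w + c)) = (w + c)/c := by
    field_simp
  rw [he]
  calc Real.exp (-w) ≤ 1 := h1
    _ ≤ (w + c)/c := by rw [le_div_iff₀ hc]; linarith

lemma aux_eh2_lb (c w : ℝ) (hc : 0 < c) (hw : 0 < w) (hw1 : w ≤ 1) (hsum : w + c ≤ 2*c) :
    (1/(6*c)) * w ^ (-(1:ℝ)/2) ≤ Real.exp (-w) / (Real.sqrt w * (w + c)) := by
  have hsw : 0 < Real.sqrt w := Real.sqrt_pos.mpr hw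
  have hwc : 0 < w + c := by linarith
  rw [show -(1:ℝ)/2 = -(1/2) by norm_num, Real.rpow_neg hw.le, ← Real.sqrt_eq_rpow]
  have h1 : (1:ℝ)/3 ≤ Real.exp (-w) := le_trans aux_exp_third (Real.exp_le_exp.mpr (by linarith))
  rw [le_div_iff₀ (by positivity)]
  have he : (1/(6*c)) * (Real.sqrt w)⁻¹ * (Real.sqrt w * (w + c)) = (w + c)/(6*c) := by
    field_simp
  rw [he]
  calc (w + c)/(6*c) ≤ (2*c)/(6*c) := by
        apply div_le_div_of_nonneg_right ?_ (by positivity)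
        · exact hsum
    _ = 1/3 := by field_simp; ring
    _ ≤ Real.exp (-w) := h1

lemma aux_eh2_nonneg (c : ℝ) (hc : 0 < c) (w : ℝ) (hw : 0 ≤ w) :
    0 ≤ Real.exp (-w) / (Real.sqrt w * (w + c)) :=
  div_nonneg (Real.exp_pos _).le (mul_nonneg (Real.sqrt_nonneg w) (by linarith))

lemma aux_sqrt_cc_pos (c : ℝ) (hc : 0 < c) : 0 < Real.sqrt (c*(1+c)) :=
  Real.sqrt_pos.mpr (by nlinarith)

/-- Lower bound for ∫₀ᵃ exp(-w)/(√w (w+c)) -/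
lemma aux_B_lower (a c : ℝ) (hc : 0 < c) (hca : c < a) :
    (1/3) / Real.sqrt (c*(1+c)) ≤ ∫ w in (0:ℝ)..a, Real.exp (-w) / (Real.sqrt w * (w + c)) := by
  have h0a : (0:ℝ) ≤ a := by linarith
  have hII := aux_II_eh2 a c hc h0a
  have hs : 0 < Real.sqrt (c*(1+c)) := aux_sqrt_cc_pos c hc
  have hsc : 0 < Real.sqrt c := Real.sqrt_pos.mpr hc
  rcases le_or_gt c 1 with hc1 | hc1
  · -- split at c
    have hII1 : IntervalIntegrable (fun w => Real.exp (-w) / (Real.sqrt w * (w + c))) volume 0 c :=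
      hII.mono_set (by rw [uIcc_of_le hc.le, uIcc_of_le h0a]; exact Icc_subset_Icc le_rfl hca.le)
    have hII2 : IntervalIntegrable (fun w => Real.exp (-w) / (Real.sqrt w * (w + c))) volume c a :=
      hII.mono_set (by rw [uIcc_of_le hca.le, uIcc_of_le h0a]; exact Icc_subset_Icc hc.le le_rfl)
    rw [← integral_add_adjacent_intervals hII1 hII2]
    have hlow : (1/(6*c)) * (2 * Real.sqrt c) ≤
        ∫ w in (0:ℝ)..c, Real.exp (-w) / (Real.sqrt w * (w + c)) := by
      have := aux_int_inv_sqrt c hc.le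
      calc (1/(6*c)) * (2 * Real.sqrt c)
          = ∫ w in (0:ℝ)..c, (1/(6*c)) * w ^ (-(1:ℝ)/2) := by
            rw [intervalIntegral.integral_const_mul, aux_int_inv_sqrt c hc.le]
        _ ≤ _ := by
            apply integral_mono_on hc.le (aux_II_inv_sqrt 0 c (1/(6*c))) hII1
            intro w hw
            rcases eq_or_lt_of_le hw.1 with h0 | h0
            · simp [← h0, Real.zero_rpow (show -(1:ℝ)/2 ≠ 0 by norm_num)]
            · exact aux_eh2_lb c w hc h0 (le_trans hw.2 hc1) (by linarith [hw.2])
    have hnn : (0:ℝ) ≤ ∫ w in c..a, Real.exp (-w) / (Real.sqrt w * (w + c)) := by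
      apply intervalIntegral.integral_nonneg hca.le
      intro w hw; exact aux_eh2_nonneg c hc w (by linarith [hw.1])
    have hfin : (1/3) / Real.sqrt (c*(1+c)) ≤ (1/(6*c)) * (2 * Real.sqrt c) := by
      have h1 : Real.sqrt c ≤ Real.sqrt (c*(1+c)) := Real.sqrt_le_sqrt (by nlinarith)
      have hcc : Real.sqrt c * Real.sqrt c = c := Real.mul_self_sqrt hc.le
      rw [div_le_iff₀ hs]
      have : (1/(6*c)) * (2 * Real.sqrt c) = 1/(3*Real.sqrt c) := by
        field_simp; nlinarith
      rw [this, div_mul_eq_mul_div, le_div_iff₀ (by positivity)]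
      nlinarith
    linarith
  · -- c > 1, split at 1
    have h1a : (1:ℝ) < a := lt_trans hc1 hca
    have hII1 : IntervalIntegrable (fun w => Real.exp (-w) / (Real.sqrt w * (w + c))) volume 0 1 :=
      hII.mono_set (by rw [uIcc_of_le (by norm_num : (0:ℝ) ≤ 1), uIcc_of_le h0a]; exact Icc_subset_Icc le_rfl h1a.le)
    have hII2 : IntervalIntegrable (fun w => Real.exp (-w) / (Real.sqrt w * (w + c))) volume 1 a :=
      hII.mono_set (by rw [uIcc_of_le h1a.le, uIcc_of_le h0a]; exact Icc_subset_Icc (by norm_num) le_rfl)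
    rw [← integral_add_adjacent_intervals hII1 hII2]
    have hlow : (1/(6*c)) * (2 * Real.sqrt 1) ≤
        ∫ w in (0:ℝ)..1, Real.exp (-w) / (Real.sqrt w * (w + c)) := by
      calc (1/(6*c)) * (2 * Real.sqrt 1)
          = ∫ w in (0:ℝ)..1, (1/(6*c)) * w ^ (-(1:ℝ)/2) := by
            rw [intervalIntegral.integral_const_mul, aux_int_inv_sqrt 1 (by norm_num)]
        _ ≤ _ := by
            apply integral_mono_on (by norm_num) (aux_II_inv_sqrt 0 1 (1/(6*c))) hII1
            intro w hw
            rcases eq_or_lt_of_le hw.1 with h0 | h0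
            · simp [← h0, Real.zero_rpow (show -(1:ℝ)/2 ≠ 0 by norm_num)]
            · exact aux_eh2_lb c w hc h0 hw.2 (by linarith [hw.2])
    have hnn : (0:ℝ) ≤ ∫ w in (1:ℝ)..a, Real.exp (-w) / (Real.sqrt w * (w + c)) := by
      apply intervalIntegral.integral_nonneg h1a.le
      intro w hw; exact aux_eh2_nonneg c hc w (by linarith [hw.1])
    have hfin : (1/3) / Real.sqrt (c*(1+c)) ≤ (1/(6*c)) * (2 * Real.sqrt 1) := by
      have h1 : c ≤ Real.sqrt (c*(1+c)) := by
        rw [Real.le_sqrt hc.le]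
        all_goals nlinarith
      rw [Real.sqrt_one, div_le_iff₀ hs]
      have : (1/(6*c)) * (2 * 1) = 1/(3*c) := by field_simp; ring
      rw [this, div_mul_eq_mul_div, le_div_iff₀ (by positivity)]
      nlinarith
    linarith

/-- Upper bound for ∫₀ᵃ exp(-w)/(√w (w+c)) -/
lemma aux_B_upper (a c : ℝ) (hc : 0 < c) (hca : c < a) :
    (∫ w in (0:ℝ)..a, Real.exp (-w) / (Real.sqrt w * (w + c))) ≤ 6 / Real.sqrt (c*(1+c)) := by
  have h0a : (0:ℝ) ≤ a := by linarith
  have hII := aux_II_eh2 a c hc h0a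
  have hs : 0 < Real.sqrt (c*(1+c)) := aux_sqrt_cc_pos c hc
  have hsc : 0 < Real.sqrt c := Real.sqrt_pos.mpr hc
  have hscc : Real.sqrt c * Real.sqrt c = c := Real.mul_self_sqrt hc.le
  rcases le_or_gt c 1 with hc1 | hc1
  · -- split at c
    have hII1 : IntervalIntegrable (fun w => Real.exp (-w) / (Real.sqrt w * (w + c))) volume 0 c :=
      hII.mono_set (by rw [uIcc_of_le hc.le, uIcc_of_le h0a]; exact Icc_subset_Icc le_rfl hca.le)
    have hII2 : IntervalIntegrable (fun w => Real.exp (-w) / (Real.sqrt w * (w + c))) volume c a :=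
      hII.mono_set (by rw [uIcc_of_le hca.le, uIcc_of_le h0a]; exact Icc_subset_Icc hc.le le_rfl)
    rw [← integral_add_adjacent_intervals hII1 hII2]
    have hb1 : (∫ w in (0:ℝ)..c, Real.exp (-w) / (Real.sqrt w * (w + c))) ≤ 2 / Real.sqrt c := by
      calc (∫ w in (0:ℝ)..c, Real.exp (-w) / (Real.sqrt w * (w + c)))
          ≤ ∫ w in (0:ℝ)..c, (1/c) * w ^ (-(1:ℝ)/2) := by
            apply integral_mono_on hc.le hII1 (aux_II_inv_sqrt 0 c (1/c))
            intro w hw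
            rcases eq_or_lt_of_le hw.1 with h0 | h0
            · simp [← h0, Real.zero_rpow (show -(1:ℝ)/2 ≠ 0 by norm_num)]
            · exact aux_eh2_ub c w hc h0
        _ = (1/c) * (2 * Real.sqrt c) := by
            rw [intervalIntegral.integral_const_mul, aux_int_inv_sqrt c hc.le]
        _ = 2 / Real.sqrt c := by field_simp; nlinarith
    have hIIr : IntervalIntegrable (fun w => w ^ (-(3:ℝ)/2)) volume c a := by
      apply ContinuousOn.intervalIntegrable
      intro w hw
      rw [uIcc_of_le hca.le] at hw
      exact (Real.continuousAt_rpow_const w _ (Or.inl (by linarith [hw.1] : w ≠ 0))).continuousWithinAt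
    have hb2 : (∫ w in c..a, Real.exp (-w) / (Real.sqrt w * (w + c))) ≤ 2 / Real.sqrt c := by
      calc (∫ w in c..a, Real.exp (-w) / (Real.sqrt w * (w + c)))
          ≤ ∫ w in c..a, w ^ (-(3:ℝ)/2) := by
            apply integral_mono_on hca.le hII2 hIIr
            intro w hw
            have hw0 : 0 < w := lt_of_lt_of_le hc hw.1
            have hsw : 0 < Real.sqrt w := Real.sqrt_pos.mpr hw0
            rw [show -(3:ℝ)/2 = -(3/2) by norm_num, Real.rpow_neg hw0.le, aux_rpow_th w hw0.le]
            rw [div_le_iff₀ (by positivity)]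
            have h1 : Real.exp (-w) ≤ 1 := Real.exp_le_one_iff.mpr (by linarith)
            have hswsw : Real.sqrt w * Real.sqrt w = w := Real.mul_self_sqrt hw0.le
            have he : (w * Real.sqrt w)⁻¹ * (Real.sqrt w * (w + c)) = (w + c)/w := by
              field_simp
            rw [he]
            calc Real.exp (-w) ≤ 1 := h1
              _ ≤ (w + c)/w := by rw [le_div_iff₀ hw0]; linarith
        _ = ((a ^ (-(3:ℝ)/2 + 1) - c ^ (-(3:ℝ)/2 + 1)) / (-(3:ℝ)/2 + 1)) := by
            rw [integral_rpow (Or.inr ⟨by norm_num, notMem_uIcc_of_lt hc (by linarith)⟩)]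
        _ ≤ 2 / Real.sqrt c := by
            have ha0 : (0:ℝ) < a := by linarith
            rw [show -(3:ℝ)/2 + 1 = -(1/2) by norm_num, Real.rpow_neg ha0.le, Real.rpow_neg hc.le,
              ← Real.sqrt_eq_rpow, ← Real.sqrt_eq_rpow]
            have h1 : 0 < Real.sqrt a := Real.sqrt_pos.mpr ha0
            have h2 : ((Real.sqrt a)⁻¹ - (Real.sqrt c)⁻¹) / (-(1/2)) =
                2 * ((Real.sqrt c)⁻¹ - (Real.sqrt a)⁻¹) := by ring
            rw [h2]
            have : (0:ℝ) ≤ (Real.sqrt a)⁻¹ := by positivity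
            rw [div_eq_mul_inv 2 (Real.sqrt c)] at *
            linarith
    have hfin : 2 / Real.sqrt c + 2 / Real.sqrt c ≤ 6 / Real.sqrt (c*(1+c)) := by
      have h1 : Real.sqrt (c*(1+c)) ≤ (3/2) * Real.sqrt c := by
        rw [show (3:ℝ)/2 * Real.sqrt c = Real.sqrt (((3/2)*Real.sqrt c)^2) from
          (Real.sqrt_sq (by positivity)).symm]
        apply Real.sqrt_le_sqrt
        nlinarith
      rw [← add_div, div_le_div_iff₀ hsc hs]
      nlinarith
    linarith
  · -- c > 1, split at 1
    have h1a : (1:ℝ) < a := lt_trans hc1 hca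
    have hII1 : IntervalIntegrable (fun w => Real.exp (-w) / (Real.sqrt w * (w + c))) volume 0 1 :=
      hII.mono_set (by rw [uIcc_of_le (by norm_num : (0:ℝ) ≤ 1), uIcc_of_le h0a]; exact Icc_subset_Icc le_rfl h1a.le)
    have hII2 : IntervalIntegrable (fun w => Real.exp (-w) / (Real.sqrt w * (w + c))) volume 1 a :=
      hII.mono_set (by rw [uIcc_of_le h1a.le, uIcc_of_le h0a]; exact Icc_subset_Icc (by norm_num) le_rfl)
    rw [← integral_add_adjacent_intervals hII1 hII2]
    have hb1 : (∫ w in (0:ℝ)..1, Real.exp (-w) / (Real.sqrt w * (w + c))) ≤ 2 / c := by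
      calc (∫ w in (0:ℝ)..1, Real.exp (-w) / (Real.sqrt w * (w + c)))
          ≤ ∫ w in (0:ℝ)..1, (1/c) * w ^ (-(1:ℝ)/2) := by
            apply integral_mono_on (by norm_num) hII1 (aux_II_inv_sqrt 0 1 (1/c))
            intro w hw
            rcases eq_or_lt_of_le hw.1 with h0 | h0
            · simp [← h0, Real.zero_rpow (show -(1:ℝ)/2 ≠ 0 by norm_num)]
            · exact aux_eh2_ub c w hc h0
        _ = (1/c) * (2 * Real.sqrt 1) := by
            rw [intervalIntegral.integral_const_mul, aux_int_inv_sqrt 1 (by norm_num)]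
        _ = 2 / c := by rw [Real.sqrt_one]; ring
    have hIIe : IntervalIntegrable (fun w => (1/c) * Real.exp (-w)) volume 1 a := by
      apply Continuous.intervalIntegrable
      fun_prop
    have hb2 : (∫ w in (1:ℝ)..a, Real.exp (-w) / (Real.sqrt w * (w + c))) ≤ 1 / c := by
      calc (∫ w in (1:ℝ)..a, Real.exp (-w) / (Real.sqrt w * (w + c)))
          ≤ ∫ w in (1:ℝ)..a, (1/c) * Real.exp (-w) := by
            apply integral_mono_on h1a.le hII2 hIIe
            intro w hw
            have hw1 : (1:ℝ) ≤ w := hw.1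
            have hw0 : 0 < w := by linarith
            have hsw1 : (1:ℝ) ≤ Real.sqrt w := by
              rw [show (1:ℝ) = Real.sqrt 1 from Real.sqrt_one.symm]
              exact Real.sqrt_le_sqrt hw1
            rw [div_le_iff₀ (by nlinarith), one_div, mul_comm ((c:ℝ))⁻¹, mul_assoc]
            nth_rewrite 1 [show Real.exp (-w) = Real.exp (-w) * 1 by ring]
            apply mul_le_mul_of_nonneg_left _ (Real.exp_pos _).le
            rw [inv_mul_eq_div, le_div_iff₀ hc]
            nlinarith
        _ = (1/c) * (Real.exp (-1) - Real.exp (-a)) := by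
            rw [intervalIntegral.integral_const_mul, integral_comp_neg Real.exp, integral_exp]
        _ ≤ 1 / c := by
            have h1 : Real.exp (-1) ≤ 1 := Real.exp_le_one_iff.mpr (by norm_num)
            have h2 : 0 < Real.exp (-a) := Real.exp_pos _
            have h3 : Real.exp (-1) - Real.exp (-a) ≤ 1 := by linarith
            calc (1/c) * (Real.exp (-1) - Real.exp (-a)) ≤ (1/c) * 1 :=
                mul_le_mul_of_nonneg_left h3 (by positivity)
              _ = 1 / c := by ring
    have hfin : 2 / c + 1 / c ≤ 6 / Real.sqrt (c*(1+c)) := by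
      have h1 : Real.sqrt (c*(1+c)) ≤ 2 * c := by
        rw [show (2:ℝ) * c = Real.sqrt ((2*c)^2) from (Real.sqrt_sq (by positivity)).symm]
        apply Real.sqrt_le_sqrt
        nlinarith
      rw [← add_div, div_le_div_iff₀ hc hs]
      nlinarith
    linarith

lemma aux_contOn_h1 (a c : ℝ) (hc : 0 < c) (h0a : 0 ≤ a) :
    ContinuousOn (fun w => w/(w+c) * Real.exp (-w)) (uIcc 0 a) := by
  apply ContinuousOn.mul
  · apply ContinuousOn.div continuousOn_id (by fun_prop)
    intro w hw
    rw [uIcc_of_le h0a] at hw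
    have : 0 ≤ w := hw.1
    positivity
  · fun_prop

lemma aux_II_h1 (a c : ℝ) (hc : 0 < c) (h0a : 0 ≤ a) :
    IntervalIntegrable (fun w => w/(w+c) * Real.exp (-w)) volume 0 a :=
  (aux_contOn_h1 a c hc h0a).intervalIntegrable

lemma aux_A_upper (a c : ℝ) (hc : 0 < c) (h0a : 0 ≤ a) :
    (∫ w in (0:ℝ)..a, w/(w+c) * Real.exp (-w)) ≤ min 1 a := by
  have hIIe : IntervalIntegrable (fun w => Real.exp (-w)) volume 0 a := by
    apply Continuous.intervalIntegrable; fun_prop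
  have h1 : (∫ w in (0:ℝ)..a, w/(w+c) * Real.exp (-w)) ≤ ∫ w in (0:ℝ)..a, Real.exp (-w) := by
    apply integral_mono_on h0a (aux_II_h1 a c hc h0a) hIIe
    intro w hw
    have hw0 : 0 ≤ w := hw.1
    have hd : w/(w+c) ≤ 1 := by rw [div_le_one (by positivity)]; linarith
    calc w/(w+c) * Real.exp (-w) ≤ 1 * Real.exp (-w) :=
        mul_le_mul_of_nonneg_right hd (Real.exp_pos _).le
      _ = Real.exp (-w) := by ring
  have h2 : (∫ w in (0:ℝ)..a, Real.exp (-w)) = 1 - Real.exp (-a) := by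
    rw [integral_comp_neg Real.exp, integral_exp]
    simp
  rw [h2] at h1
  have h3 : 1 - Real.exp (-a) ≤ 1 := by linarith [Real.exp_pos (-a)]
  have h4 : 1 - Real.exp (-a) ≤ a := by linarith [Real.add_one_le_exp (-a)]
  exact le_trans h1 (le_min h3 h4)

lemma aux_A_lower (a c : ℝ) (hc : 0 < c) (hca : c < a) (ha1 : a ≤ 1) :
    a/18 ≤ ∫ w in (0:ℝ)..a, w/(w+c) * Real.exp (-w) := by
  have ha : 0 < a := lt_trans hc hca
  have hII := aux_II_h1 a c hc ha.le
  have hII1 : IntervalIntegrable (fun w => w/(w+c) * Real.exp (-w)) volume 0 (a/2) :=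
    hII.mono_set (by rw [uIcc_of_le (by linarith), uIcc_of_le ha.le]; exact Icc_subset_Icc le_rfl (by linarith))
  have hII2 : IntervalIntegrable (fun w => w/(w+c) * Real.exp (-w)) volume (a/2) a :=
    hII.mono_set (by rw [uIcc_of_le (by linarith), uIcc_of_le ha.le]; exact Icc_subset_Icc (by linarith) le_rfl)
  rw [← integral_add_adjacent_intervals hII1 hII2]
  have hnn : (0:ℝ) ≤ ∫ w in (0:ℝ)..(a/2), w/(w+c) * Real.exp (-w) := by
    apply intervalIntegral.integral_nonneg (by linarith)
    intro w hw
    have : 0 ≤ w := hw.1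
    positivity
  have hlow : a/18 ≤ ∫ w in (a/2)..a, w/(w+c) * Real.exp (-w) := by
    have hconst : a/18 = ∫ _ in (a/2)..a, (1:ℝ)/9 := by
      rw [intervalIntegral.integral_const, smul_eq_mul]; ring
    rw [hconst]
    apply integral_mono_on (by linarith) (intervalIntegrable_const) hII2
    intro w hw
    have hw1 : a/2 ≤ w := hw.1
    have hw2 : w ≤ a := hw.2
    have hw0 : 0 < w := by linarith
    have hd : (1:ℝ)/3 ≤ w/(w+c) := by
      rw [le_div_iff₀ (by positivity)]
      linarith
    have he : (1:ℝ)/3 ≤ Real.exp (-w) :=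
      le_trans aux_exp_third (Real.exp_le_exp.mpr (by linarith))
    calc (1:ℝ)/9 = (1/3) * (1/3) := by norm_num
      _ ≤ w/(w+c) * Real.exp (-w) := mul_le_mul hd he (by norm_num) (by positivity)
  linarith

/-- integrability of the main integrand -/
lemma aux_II_g (a b c : ℝ) (hb : 0 < b) (hc : 0 < c) (h0a : 0 ≤ a) :
    IntervalIntegrable (fun w => ((w + b) ^ ((3:ℝ)/2) / (Real.sqrt w * (w + c))) * Real.exp (-w))
      volume 0 a := by
  apply (aux_II_inv_sqrt 0 a ((a+b) ^ ((3:ℝ)/2) / c)).mono_fun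
  · exact (by fun_prop :
      Measurable fun w => ((w + b) ^ ((3:ℝ)/2) / (Real.sqrt w * (w + c))) * Real.exp (-w)).aestronglyMeasurable
  · rw [Filter.EventuallyLE, ae_restrict_iff' measurableSet_uIoc]
    refine Filter.Eventually.of_forall (fun w hw => ?_)
    rw [uIoc_of_le h0a] at hw
    obtain ⟨hw0, hwa⟩ := hw
    have hsw : 0 < Real.sqrt w := Real.sqrt_pos.mpr hw0
    have hwc : 0 < w + c := by linarith
    have hM : (w + b) ^ ((3:ℝ)/2) ≤ (a + b) ^ ((3:ℝ)/2) :=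
      Real.rpow_le_rpow (by linarith) (by linarith) (by norm_num)
    have hMnn : (0:ℝ) ≤ (w + b) ^ ((3:ℝ)/2) := Real.rpow_nonneg (by linarith) _
    rw [Real.norm_eq_abs, Real.norm_eq_abs, abs_of_nonneg (by positivity),
      abs_of_nonneg (by positivity)]
    have step1 : ((w + b) ^ ((3:ℝ)/2) / (Real.sqrt w * (w + c))) * Real.exp (-w)
        ≤ ((a + b) ^ ((3:ℝ)/2) / (Real.sqrt w * c)) * 1 := by
      apply mul_le_mul _ (Real.exp_le_one_iff.mpr (by linarith)) (Real.exp_pos _).le (by positivity)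
      apply div_le_div₀ (by positivity) hM (by positivity)
      nlinarith
    have step2 : ((a + b) ^ ((3:ℝ)/2) / (Real.sqrt w * c)) * 1
        = ((a+b) ^ ((3:ℝ)/2) / c) * w ^ (-(1:ℝ)/2) := by
      rw [show -(1:ℝ)/2 = -(1/2) by norm_num, Real.rpow_neg hw0.le, ← Real.sqrt_eq_rpow,
        mul_one, ← div_div, div_right_comm, ← div_eq_mul_inv]
    linarith [le_of_eq step2]

lemma aux_cube_mono (x y : ℝ) (hx : 0 ≤ x) (hxy : x ≤ y) :
    x * Real.sqrt x ≤ y * Real.sqrt y :=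
  mul_le_mul hxy (Real.sqrt_le_sqrt hxy) (Real.sqrt_nonneg x) (by linarith)

lemma aux_cube_add (w b : ℝ) (hw : 0 ≤ w) (hb : 0 ≤ b) :
    (w + b) * Real.sqrt (w + b) ≤ 3 * (w * Real.sqrt w) + 3 * (b * Real.sqrt b) := by
  have h := aux_sqrt_add_le w b hw hb
  have hx := Real.sqrt_nonneg w
  have hy := Real.sqrt_nonneg b
  have hxx : Real.sqrt w * Real.sqrt w = w := Real.mul_self_sqrt hw
  have hyy : Real.sqrt b * Real.sqrt b = b := Real.mul_self_sqrt hb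
  have h2 : (w + b) * Real.sqrt (w + b) ≤ (w + b) * (Real.sqrt w + Real.sqrt b) :=
    mul_le_mul_of_nonneg_left h (by linarith)
  nlinarith [mul_nonneg (add_nonneg hx hy) (sq_nonneg (Real.sqrt w - Real.sqrt b))]

lemma aux_g_eq (b c w : ℝ) (hb : 0 ≤ b) (hw : 0 ≤ w) :
    ((w + b) ^ ((3:ℝ)/2) / (Real.sqrt w * (w + c))) * Real.exp (-w)
      = ((w + b) * Real.sqrt (w + b)) * (Real.exp (-w) / (Real.sqrt w * (w + c))) := by
  rw [aux_rpow_th _ (by linarith)]; ring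

lemma aux_h1_eq (c w : ℝ) (hc : 0 < c) (hw : 0 < w) :
    w/(w+c) * Real.exp (-w)
      = (w * Real.sqrt w) * (Real.exp (-w) / (Real.sqrt w * (w + c))) := by
  have hsw : Real.sqrt w ≠ 0 := ne_of_gt (Real.sqrt_pos.mpr hw)
  have hwc : w + c ≠ 0 := by positivity
  field_simp

theorem stmt3 (K : ℝ) (hK : 1 ≤ K) :
    ∃ c₁ c₂ : ℝ, 0 < c₁ ∧ 0 < c₂ ∧
      ∀ a b c : ℝ, 0 < c → c < b → b < a → (1 ≤ a → a ≤ K * b) →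
        c₁ * (min 1 a + b ^ ((3:ℝ)/2) / Real.sqrt (c * (1 + c))) ≤
          (∫ w in (0:ℝ)..a, ((w + b) ^ ((3:ℝ)/2) / (Real.sqrt w * (w + c))) * Real.exp (-w)) ∧
        (∫ w in (0:ℝ)..a, ((w + b) ^ ((3:ℝ)/2) / (Real.sqrt w * (w + c))) * Real.exp (-w)) ≤
          c₂ * (min 1 a + b ^ ((3:ℝ)/2) / Real.sqrt (c * (1 + c))) := by
  have hK0 : 0 < K := lt_of_lt_of_le one_pos hK
  refine ⟨1/(40*K), 20, by positivity, by norm_num, ?_⟩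
  intro a b c hc hcb hba hKa
  have hb : 0 < b := lt_trans hc hcb
  have ha : 0 < a := lt_trans hb hba
  have hca : c < a := lt_trans hcb hba
  have h0a : (0:ℝ) ≤ a := ha.le
  have hs : 0 < Real.sqrt (c*(1+c)) := aux_sqrt_cc_pos c hc
  have hbb : b ^ ((3:ℝ)/2) = b * Real.sqrt b := aux_rpow_th b hb.le
  have hbbnn : 0 ≤ b ^ ((3:ℝ)/2) := Real.rpow_nonneg hb.le _
  have hmin0 : 0 ≤ min 1 a := le_min (by norm_num) h0a
  have hIIg := aux_II_g a b c hb hc h0a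
  have hIIh1 := aux_II_h1 a c hc h0a
  have hIIeh2 := aux_II_eh2 a c hc h0a
  -- F1 : ∫ h1 ≤ I
  have F1 : (∫ w in (0:ℝ)..a, w/(w+c) * Real.exp (-w)) ≤
      ∫ w in (0:ℝ)..a, ((w + b) ^ ((3:ℝ)/2) / (Real.sqrt w * (w + c))) * Real.exp (-w) := by
    apply integral_mono_on h0a hIIh1 hIIg
    intro w hw
    rcases eq_or_lt_of_le hw.1 with h0 | h0
    · simp [← h0]
    · rw [aux_g_eq b c w hb.le h0.le, aux_h1_eq c w hc h0]
      apply mul_le_mul_of_nonneg_right (aux_cube_mono w (w+b) h0.le (by linarith))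
      exact aux_eh2_nonneg c hc w h0.le
  -- F2 : b^{3/2} * B ≤ I
  have F2 : b ^ ((3:ℝ)/2) * (∫ w in (0:ℝ)..a, Real.exp (-w) / (Real.sqrt w * (w + c))) ≤
      ∫ w in (0:ℝ)..a, ((w + b) ^ ((3:ℝ)/2) / (Real.sqrt w * (w + c))) * Real.exp (-w) := by
    rw [← intervalIntegral.integral_const_mul]
    apply integral_mono_on h0a (hIIeh2.const_mul _) hIIg
    intro w hw
    rcases eq_or_lt_of_le hw.1 with h0 | h0
    · simp [← h0]
    · rw [aux_g_eq b c w hb.le h0.le, hbb]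
      apply mul_le_mul_of_nonneg_right (aux_cube_mono b (w+b) hb.le (by linarith))
      exact aux_eh2_nonneg c hc w h0.le
  -- F3 : I ≤ 3 A + 3 b^{3/2} B
  have F3 : (∫ w in (0:ℝ)..a, ((w + b) ^ ((3:ℝ)/2) / (Real.sqrt w * (w + c))) * Real.exp (-w)) ≤
      3 * (∫ w in (0:ℝ)..a, w/(w+c) * Real.exp (-w)) +
      (3 * b ^ ((3:ℝ)/2)) * (∫ w in (0:ℝ)..a, Real.exp (-w) / (Real.sqrt w * (w + c))) := by
    rw [← intervalIntegral.integral_const_mul, ← intervalIntegral.integral_const_mul,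
      ← intervalIntegral.integral_add (hIIh1.const_mul 3) (hIIeh2.const_mul _)]
    apply integral_mono_on h0a hIIg ((hIIh1.const_mul 3).add (hIIeh2.const_mul _))
    intro w hw
    rcases eq_or_lt_of_le hw.1 with h0 | h0
    · simp [← h0]
    · have heq : 3 * (w/(w+c) * Real.exp (-w)) +
          (3 * b ^ ((3:ℝ)/2)) * (Real.exp (-w) / (Real.sqrt w * (w + c)))
          = (3 * (w * Real.sqrt w) + 3 * (b * Real.sqrt b)) *
            (Real.exp (-w) / (Real.sqrt w * (w + c))) := by
        rw [aux_h1_eq c w hc h0, hbb]; ring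
      rw [aux_g_eq b c w hb.le h0.le, heq]
      apply mul_le_mul_of_nonneg_right (aux_cube_add w b h0.le hb.le)
      exact aux_eh2_nonneg c hc w h0.le
  have hAu := aux_A_upper a c hc h0a
  have hBu := aux_B_upper a c hc hca
  have hBl := aux_B_lower a c hc hca
  have hAl : a ≤ 1 → a/18 ≤ ∫ w in (0:ℝ)..a, w/(w+c) * Real.exp (-w) :=
    fun ha1 => aux_A_lower a c hc hca ha1
  -- abstract the integrals
  set A := (∫ w in (0:ℝ)..a, w/(w+c) * Real.exp (-w)) with hA
  set B := (∫ w in (0:ℝ)..a, Real.exp (-w) / (Real.sqrt w * (w + c))) with hB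
  set I := (∫ w in (0:ℝ)..a, ((w + b) ^ ((3:ℝ)/2) / (Real.sqrt w * (w + c))) * Real.exp (-w)) with hI
  set T := b ^ ((3:ℝ)/2) / Real.sqrt (c*(1+c)) with hT
  clear_value A B I T
  clear hA hB hI hIIg hIIh1 hIIeh2
  have hT0 : 0 ≤ T := by rw [hT]; positivity
  have hTl : (1/3) * T ≤ I := by
    have h1 : b ^ ((3:ℝ)/2) * ((1/3) / Real.sqrt (c*(1+c))) ≤ b ^ ((3:ℝ)/2) * B :=
      mul_le_mul_of_nonneg_left hBl hbbnn
    have h2 : (1/3) * T = b ^ ((3:ℝ)/2) * ((1/3) / Real.sqrt (c*(1+c))) := by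
      rw [hT]; ring
    linarith
  constructor
  · -- lower bound
    rcases le_or_gt a 1 with ha1 | ha1
    · rw [min_eq_right ha1]
      have hAl2 := hAl ha1
      have h36 : 1/(40*K) ≤ 1/36 := by
        rw [div_le_div_iff₀ (by positivity) (by norm_num)]; linarith
      have hstep := mul_le_mul_of_nonneg_right h36 (add_nonneg h0a hT0)
      linarith
    · rw [min_eq_left ha1.le]
      have hKb : a ≤ K * b := hKa ha1.le
      have hKb1 : 1 ≤ K * b := by linarith
      have hsb : Real.sqrt (c*(1+c)) ≤ Real.sqrt b * Real.sqrt (1+b) := by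
        rw [← Real.sqrt_mul hb.le]
        exact Real.sqrt_le_sqrt (by nlinarith)
      have h1b : Real.sqrt (1+b) ≤ 2*K*b := by
        rw [show 2*K*b = Real.sqrt ((2*K*b)^2) from (Real.sqrt_sq (by positivity)).symm]
        apply Real.sqrt_le_sqrt
        nlinarith
      have hs2 : Real.sqrt (c*(1+c)) ≤ 2*K*(b * Real.sqrt b) := by
        calc Real.sqrt (c*(1+c)) ≤ Real.sqrt b * Real.sqrt (1+b) := hsb
          _ ≤ Real.sqrt b * (2*K*b) := mul_le_mul_of_nonneg_left h1b (Real.sqrt_nonneg b)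
          _ = 2*K*(b * Real.sqrt b) := by ring
      have hT1 : 1 ≤ 2*K*T := by
        have he : 2*K*T = (2*K*(b * Real.sqrt b))/Real.sqrt (c*(1+c)) := by
          rw [hT, hbb]; ring
        rw [he, le_div_iff₀ hs, one_mul]
        exact hs2
      have h3 : T ≤ 2*K*T := by nlinarith
      have hKT : 0 ≤ K*T := by positivity
      rw [div_mul_eq_mul_div, div_le_iff₀ (by positivity : (0:ℝ) < 40*K), one_mul]
      have h4 : (40*K)*((1/3)*T) ≤ (40*K)*I :=
        mul_le_mul_of_nonneg_left hTl (by positivity)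
      linarith
  · -- upper bound
    have h1 : (3 * b ^ ((3:ℝ)/2)) * B ≤ 18 * T := by
      have := mul_le_mul_of_nonneg_left hBu (by positivity : (0:ℝ) ≤ 3 * b ^ ((3:ℝ)/2))
      have he : (3 * b ^ ((3:ℝ)/2)) * (6 / Real.sqrt (c*(1+c))) = 18 * T := by
        rw [hT]; ring
      linarith
    linarith
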